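/- Let Δ = Δ₁ + ⋯ + Δ_r be a Q-nef-partition in ℝ^d with associated polytopes ∇₁,…,∇_r (so Δ₁ + ⋯ + Δ_r and ∇₁ + ⋯ + ∇_r form a dual pair of Q-nef-partitions). Then, for each i = 1,…,r, one has Δ_i = {0} if and only if ∇_i = {0}. -/

import Mathlib

open Pointwise

noncomputable section

/-- The standard inner product on `n → ℝ`. -/
def dot {n : Type*} [Fintype n] (x y : n → ℝ) : ℝ := ∑ i, x i * y i

/-- The lattice points of `n → ℝ`: points with integer coordinates. -/
def latt (n : Type*) [Fintype n] : Set (n → ℝ) := {x | ∀ i, ∃ m : ℤ, x i = (m : ℝ)}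

/-- Polar dual `S* = {y | ⟨x,y⟩ ≥ -1 ∀ x ∈ S}`. -/
def polarDual {n : Type*} [Fintype n] (S : Set (n → ℝ)) : Set (n → ℝ) :=
  {y | ∀ x ∈ S, -1 ≤ dot x y}

/-- `[S]`: the convex hull of the lattice points of `S`. -/
def latticeHull {n : Type*} [Fintype n] (S : Set (n → ℝ)) : Set (n → ℝ) :=
  convexHull ℝ (S ∩ latt n)

/-- A polytope: the convex hull of a finite set. -/
def IsPolytope {n : Type*} [Fintype n] (P : Set (n → ℝ)) : Prop :=
  ∃ F : Set (n → ℝ), F.Finite ∧ P = convexHull ℝ F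

/-- A lattice polytope: the convex hull of a finite set of lattice points. -/
def IsLatticePolytope {n : Type*} [Fintype n] (P : Set (n → ℝ)) : Prop :=
  ∃ F : Set (n → ℝ), F.Finite ∧ F ⊆ latt n ∧ P = convexHull ℝ F

/-- A full-dimensional polytope `P` with `0` in its interior is Q-reflexive if
`[[P]*] = P*`. -/
def IsQReflexive {n : Type*} [Fintype n] (P : Set (n → ℝ)) : Prop :=
  IsPolytope P ∧ 0 ∈ interior P ∧ latticeHull (polarDual (latticeHull P)) = polarDual P

/-- A full-dimensional lattice polytope `P` with `0` in its interior is almost reflexive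
if `[[P*]*] = P`. -/
def IsAlmostReflexive {n : Type*} [Fintype n] (P : Set (n → ℝ)) : Prop :=
  IsLatticePolytope P ∧ 0 ∈ interior P ∧
    latticeHull (polarDual (latticeHull (polarDual P))) = P

/-- A full-dimensional lattice polytope `P` with `0` in its interior is reflexive
if `P*` is a lattice polytope. -/
def IsReflexive {n : Type*} [Fintype n] (P : Set (n → ℝ)) : Prop :=
  IsLatticePolytope P ∧ 0 ∈ interior P ∧ IsLatticePolytope (polarDual P)

/-- A Q-nef-partition: a Minkowski-sum decomposition `Δ = Δ₁ + ⋯ + Δ_r` of a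
Q-reflexive polytope into polytopes with `0 ∈ Δᵢ`, such that
`[Δ] = [Δ₁] + ⋯ + [Δ_r]`. -/
def IsQNefPartition {d r : ℕ} (Δ : Fin r → Set (Fin d → ℝ)) : Prop :=
  IsQReflexive (∑ i, Δ i) ∧ (∀ i, IsPolytope (Δ i)) ∧
    (∀ i, (0 : Fin d → ℝ) ∈ Δ i) ∧
    latticeHull (∑ i, Δ i) = ∑ i, latticeHull (Δ i)

/-- `∇_j := {y : ⟨x, y⟩ ≥ −δ_{ij} for all x ∈ [Δ_i] and all i}`. -/
def nabla {d r : ℕ} (Δ : Fin r → Set (Fin d → ℝ)) (j : Fin r) : Set (Fin d → ℝ) :=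
  {y | ∀ i, ∀ x ∈ latticeHull (Δ i), -(if i = j then (1 : ℝ) else 0) ≤ dot x y}
section AuxLemmas

variable {d : ℕ}

lemma dot_comm' (x y : Fin d → ℝ) : dot x y = dot y x := by
  simp [dot, mul_comm]

lemma dot_add_left' (x x' y : Fin d → ℝ) : dot (x + x') y = dot x y + dot x' y := by
  simp [dot, add_mul, Finset.sum_add_distrib]

lemma dot_add_right' (x y y' : Fin d → ℝ) : dot x (y + y') = dot x y + dot x y' := by
  simp [dot, mul_add, Finset.sum_add_distrib]

lemma dot_sub_right' (x y y' : Fin d → ℝ) : dot x (y - y') = dot x y - dot x y' := by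
  simp [dot, mul_sub, Finset.sum_sub_distrib]

lemma dot_smul_left' (c : ℝ) (x y : Fin d → ℝ) : dot (c • x) y = c * dot x y := by
  simp [dot, Finset.mul_sum, mul_assoc]

lemma dot_smul_right' (c : ℝ) (x y : Fin d → ℝ) : dot x (c • y) = c * dot x y := by
  simp [dot, Finset.mul_sum]
  congr 1; funext j; ring

lemma dot_zero_left' (y : Fin d → ℝ) : dot 0 y = 0 := by simp [dot]

lemma dot_zero_right' (x : Fin d → ℝ) : dot x 0 = 0 := by simp [dot]

lemma dot_self_nonneg' (x : Fin d → ℝ) : 0 ≤ dot x x :=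
  Finset.sum_nonneg fun j _ => mul_self_nonneg (x j)

lemma dot_self_eq_zero' {x : Fin d → ℝ} (h : dot x x = 0) : x = 0 := by
  funext j
  have h1 := (Finset.sum_eq_zero_iff_of_nonneg (fun j _ => mul_self_nonneg (x j))).1 h j
    (Finset.mem_univ j)
  exact mul_self_eq_zero.1 h1

lemma dot_self_pos' {x : Fin d → ℝ} (h : x ≠ 0) : 0 < dot x x :=
  lt_of_le_of_ne (dot_self_nonneg' x) (fun h' => h (dot_self_eq_zero' h'.symm))

lemma dot_sum_left' {ι : Type*} (s : Finset ι) (f : ι → (Fin d → ℝ)) (y : Fin d → ℝ) :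
    dot (∑ k ∈ s, f k) y = ∑ k ∈ s, dot (f k) y := by
  simp only [dot, Finset.sum_apply, Finset.sum_mul]
  exact Finset.sum_comm

lemma isLinearMap_dot_left' (y : Fin d → ℝ) : IsLinearMap ℝ fun x : Fin d → ℝ => dot x y :=
  ⟨fun a b => dot_add_left' a b y, fun c a => dot_smul_left' c a y⟩

lemma isLinearMap_dot_right' (x : Fin d → ℝ) : IsLinearMap ℝ fun y : Fin d → ℝ => dot x y :=
  ⟨fun a b => dot_add_right' x a b, fun c a => dot_smul_right' c x a⟩

/-- min principle, first argument -/
lemma dot_le_on_hull' {G : Set (Fin d → ℝ)} {y : Fin d → ℝ} {c : ℝ}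
    (h : ∀ a ∈ G, c ≤ dot a y) : ∀ x ∈ convexHull ℝ G, c ≤ dot x y := by
  intro x hx
  have hsub : convexHull ℝ G ⊆ {x : Fin d → ℝ | c ≤ dot x y} :=
    convexHull_min h (convex_halfSpace_ge (isLinearMap_dot_left' y) c)
  exact hsub hx

/-- min principle, second argument -/
lemma dot_le_on_hull_right' {G : Set (Fin d → ℝ)} {x : Fin d → ℝ} {c : ℝ}
    (h : ∀ b ∈ G, c ≤ dot x b) : ∀ y ∈ convexHull ℝ G, c ≤ dot x y := by
  intro y hy
  have hsub : convexHull ℝ G ⊆ {y : Fin d → ℝ | c ≤ dot x y} :=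
    convexHull_min h (convex_halfSpace_ge (isLinearMap_dot_right' x) c)
  exact hsub hy

lemma abs_dot_le' {x : Fin d → ℝ} {M : ℝ} (h : ∀ j, |x j| ≤ M) (y : Fin d → ℝ) :
    |dot x y| ≤ M * ∑ j, |y j| := by
  calc |dot x y| ≤ ∑ j, |x j * y j| := Finset.abs_sum_le_sum_abs _ _
    _ = ∑ j, |x j| * |y j| := by simp [abs_mul]
    _ ≤ ∑ j, M * |y j| :=
        Finset.sum_le_sum fun j _ => mul_le_mul_of_nonneg_right (h j) (abs_nonneg _)
    _ = M * ∑ j, |y j| := by rw [Finset.mul_sum]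

lemma zero_mem_latt' : (0 : Fin d → ℝ) ∈ latt (Fin d) := fun _ => ⟨0, by simp⟩

lemma latt_smul_int' (m : ℤ) {z : Fin d → ℝ} (hz : z ∈ latt (Fin d)) :
    ((m : ℝ)) • z ∈ latt (Fin d) := by
  intro j
  obtain ⟨k, hk⟩ := hz j
  refine ⟨m * k, ?_⟩
  show (m:ℝ) * z j = _
  rw [hk]; push_cast; ring

lemma dot_int' {a w : Fin d → ℝ} (ha : a ∈ latt (Fin d)) (hw : w ∈ latt (Fin d)) :
    ∃ m : ℤ, dot a w = (m : ℝ) := by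
  choose A hA using ha
  choose W hW using hw
  refine ⟨∑ j, A j * W j, ?_⟩
  rw [dot]
  push_cast
  exact Finset.sum_congr rfl fun j _ => by rw [hA j, hW j]

lemma mem_setSum' {ι : Type*} [DecidableEq ι] {S : ι → Set (Fin d → ℝ)} {s : Finset ι}
    {x : Fin d → ℝ} :
    x ∈ ∑ i ∈ s, S i ↔
      ∃ f : ι → (Fin d → ℝ), (∀ i ∈ s, f i ∈ S i) ∧ x = ∑ i ∈ s, f i := by
  induction s using Finset.induction_on generalizing x with
  | empty =>
    simp only [Finset.sum_empty]
    constructor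
    · intro hx
      exact ⟨fun _ => 0, by simp, by simpa using hx⟩
    · rintro ⟨f, -, rfl⟩
      simp
  | @insert a s ha ih =>
    rw [Finset.sum_insert ha]
    constructor
    · intro hx
      obtain ⟨u, hu, v, hv, huv⟩ := Set.mem_add.1 hx
      obtain ⟨f, hf, rfl⟩ := ih.1 hv
      refine ⟨Function.update f a u, ?_, ?_⟩
      · intro i hi
        rcases Finset.mem_insert.1 hi with rfl | his
        · simpa using hu
        · rw [Function.update_of_ne (by rintro rfl; exact ha his) u f]
          exact hf i his
      · have hs : ∑ i ∈ s, Function.update f a u i = ∑ i ∈ s, f i :=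
          Finset.sum_congr rfl fun i hi =>
            Function.update_of_ne (by rintro rfl; exact ha hi) u f
        rw [Finset.sum_insert ha, Function.update_self, hs]
        exact huv.symm
    · rintro ⟨f, hf, rfl⟩
      rw [Finset.sum_insert ha]
      exact Set.add_mem_add (hf a (Finset.mem_insert_self a s))
        (ih.2 ⟨f, fun i hi => hf i (Finset.mem_insert_of_mem hi), rfl⟩)

lemma polytope_bound' {P : Set (Fin d → ℝ)} (h : IsPolytope P) :
    ∃ M : ℝ, 0 ≤ M ∧ ∀ x ∈ P, ∀ j, |x j| ≤ M := by
  classical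
  obtain ⟨F, hF, rfl⟩ := h
  set M : ℝ := ∑ v ∈ hF.toFinset, ∑ j, |v j| with hM
  have hM0 : 0 ≤ M := Finset.sum_nonneg fun v _ => Finset.sum_nonneg fun j _ => abs_nonneg _
  have hvM : ∀ v ∈ F, ∀ j, |v j| ≤ M := by
    intro v hv j
    have h1 : |v j| ≤ ∑ j, |v j| :=
      Finset.single_le_sum (fun j _ => abs_nonneg (v j)) (Finset.mem_univ j)
    have h2 : ∑ j, |v j| ≤ M :=
      Finset.single_le_sum (f := fun v : Fin d → ℝ => ∑ j, |v j|)
        (fun v _ => Finset.sum_nonneg fun j _ => abs_nonneg _) (hF.mem_toFinset.2 hv)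
    linarith
  refine ⟨M, hM0, ?_⟩
  intro x hx j
  have lin : IsLinearMap ℝ (fun x : Fin d → ℝ => x j) := ⟨fun _ _ => rfl, fun _ _ => rfl⟩
  have hsub : convexHull ℝ F ⊆ {x : Fin d → ℝ | x j ≤ M} ∩ {x : Fin d → ℝ | -M ≤ x j} :=
    convexHull_min
      (fun v hv => ⟨(abs_le.1 (hvM v hv j)).2, (abs_le.1 (hvM v hv j)).1⟩)
      ((convex_halfSpace_le lin M).inter (convex_halfSpace_ge lin (-M)))
  obtain ⟨h1, h2⟩ := hsub hx
  exact abs_le.2 ⟨h2, h1⟩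

lemma finite_bounded_latt' {P : Set (Fin d → ℝ)} (M : ℝ) (hP : ∀ x ∈ P, ∀ j, |x j| ≤ M) :
    (P ∩ latt (Fin d)).Finite := by
  classical
  obtain ⟨N, hN⟩ : ∃ N : ℤ, M ≤ N := ⟨⌈M⌉, Int.le_ceil M⟩
  apply Set.Finite.subset
    (Set.Finite.image (fun g : Fin d → ℤ => fun j => (g j : ℝ))
      (Set.Finite.pi fun _ : Fin d => Set.finite_Icc (-N) N))
  rintro x ⟨hxP, hxl⟩
  choose g hg using hxl
  refine ⟨g, ?_, ?_⟩
  · intro j _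
    have h1 : |x j| ≤ (N : ℝ) := le_trans (hP x hxP j) hN
    have h2 : |(g j : ℝ)| ≤ (N : ℝ) := by rwa [← hg j]
    have h3 : |g j| ≤ N := by exact_mod_cast h2
    rw [Set.mem_Icc]
    constructor <;> [linarith [(abs_le.1 h3).1]; linarith [(abs_le.1 h3).2]]
  · funext j
    exact (hg j).symm

end AuxLemmas
section RatCone

variable {d : ℕ}

/-- coordinatewise cast of a rational vector -/
def castQ' (q : Fin d → ℚ) : Fin d → ℝ := fun j => (q j : ℝ)

def dotQ' (x y : Fin d → ℚ) : ℚ := ∑ j, x j * y j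

lemma castQ_add' (a b : Fin d → ℚ) : castQ' (a + b) = castQ' a + castQ' b := by
  funext j; simp [castQ']

lemma castQ_smul' (c : ℚ) (a : Fin d → ℚ) : castQ' (c • a) = (c : ℝ) • castQ' a := by
  funext j; simp [castQ']

lemma castQ_dot' (a b : Fin d → ℚ) : dot (castQ' a) (castQ' b) = ((dotQ' a b : ℚ) : ℝ) := by
  simp [dot, dotQ', castQ']

def dotQForm' (d : ℕ) : LinearMap.BilinForm ℚ (Fin d → ℚ) :=
  LinearMap.mk₂ ℚ dotQ'
    (fun a b c => by simp [dotQ', add_mul, Finset.sum_add_distrib])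
    (fun q a c => by simp [dotQ', Finset.mul_sum, mul_assoc])
    (fun a b c => by simp [dotQ', mul_add, Finset.sum_add_distrib])
    (fun q a c => by
      simp only [dotQ', Pi.smul_apply, smul_eq_mul, Finset.mul_sum]
      exact Finset.sum_congr rfl fun j _ => by ring)

lemma dotQForm_apply' (x y : Fin d → ℚ) : dotQForm' d x y = dotQ' x y := rfl

def dotCastLin' (y : Fin d → ℝ) : (Fin d → ℚ) →ₗ[ℚ] ℝ where
  toFun u := dot (castQ' u) y
  map_add' a b := by
    show dot (castQ' (a + b)) y = dot (castQ' a) y + dot (castQ' b) y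
    rw [castQ_add', dot_add_left']
  map_smul' c a := by
    show dot (castQ' (c • a)) y = (RingHom.id ℚ) c • dot (castQ' a) y
    rw [castQ_smul', dot_smul_left']
    simp [Rat.smul_def]

lemma dotQ_self_eq_zero' {x : Fin d → ℚ} (h : dotQ' x x = 0) : x = 0 := by
  funext j
  have h1 := (Finset.sum_eq_zero_iff_of_nonneg (fun j _ => mul_self_nonneg (x j))).1 h j
    (Finset.mem_univ j)
  exact mul_self_eq_zero.1 h1

/-- Core number-theoretic lemma: a rational cone containing a nonzero real point
contains a nonzero lattice point. -/
lemma ratCone' {A : Set (Fin d → ℝ)} (hAfin : A.Finite) (hAlat : A ⊆ latt (Fin d))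
    {y : Fin d → ℝ} (hy : y ≠ 0) (hpos : ∀ a ∈ A, 0 ≤ dot a y) :
    ∃ z : Fin d → ℝ, z ∈ latt (Fin d) ∧ z ≠ 0 ∧ ∀ a ∈ A, 0 ≤ dot a z := by
  classical
  set Fs := hAfin.toFinset with hFs
  -- uniform bound on the coefficient vectors
  set C : ℝ := 1 + ∑ a ∈ Fs, ∑ j, |a j| with hC
  have hCs : 0 ≤ ∑ a ∈ Fs, ∑ j, |a j| :=
    Finset.sum_nonneg fun a _ => Finset.sum_nonneg fun j _ => abs_nonneg _
  have hC1 : (1 : ℝ) ≤ C := by rw [hC]; linarith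
  have hC0 : (0 : ℝ) < C := by linarith
  have hCa : ∀ a ∈ A, ∑ j, |a j| ≤ C := by
    intro a ha
    have h1 : ∑ j, |a j| ≤ ∑ a ∈ Fs, ∑ j, |a j| :=
      Finset.single_le_sum (f := fun a : Fin d → ℝ => ∑ j, |a j|)
        (fun a _ => Finset.sum_nonneg fun j _ => abs_nonneg _) (hAfin.mem_toFinset.2 ha)
    linarith
  -- dichotomy: pairing is 0 or at least δ
  obtain ⟨δ, hδ0, hδ⟩ : ∃ δ : ℝ, 0 < δ ∧ ∀ a ∈ A, dot a y = 0 ∨ δ ≤ dot a y := by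
    by_cases hne : (Fs.filter fun a => dot a y ≠ 0).Nonempty
    · refine ⟨(Fs.filter fun a => dot a y ≠ 0).inf' hne fun a => dot a y, ?_, ?_⟩
      · rw [Finset.lt_inf'_iff]
        intro a ha
        obtain ⟨haF, hane⟩ := Finset.mem_filter.1 ha
        exact lt_of_le_of_ne (hpos a (hAfin.mem_toFinset.1 haF)) (Ne.symm hane)
      · intro a ha
        by_cases h0 : dot a y = 0
        · exact Or.inl h0
        · exact Or.inr (Finset.inf'_le _ (Finset.mem_filter.2 ⟨hAfin.mem_toFinset.2 ha, h0⟩))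
    · refine ⟨1, one_pos, fun a ha => Or.inl ?_⟩
      by_contra h0
      exact hne ⟨a, Finset.mem_filter.2 ⟨hAfin.mem_toFinset.2 ha, h0⟩⟩
  have hyy : 0 < dot y y := dot_self_pos' hy
  set τ : ℝ := δ / C with hτ
  have hτ0 : 0 < τ := div_pos hδ0 hC0
  set θ : ℝ := min (τ ^ 2) (dot y y) with hθ
  have hθ0 : 0 < θ := lt_min (by positivity) hyy
  set ρ : ℝ := min 1 (θ / (d + 1)) with hρ
  have hρ0 : 0 < ρ := lt_min one_pos (by positivity)
  have hρ1 : ρ ≤ 1 := min_le_left _ _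
  have hρ2 : ρ ≤ θ / (d + 1) := min_le_right _ _
  -- rational approximation of y
  choose q hq using fun j : Fin d => exists_rat_near (y j) hρ0
  -- the subspace spanned by the active constraints
  set T₀ : Set (Fin d → ℚ) := {t | castQ' t ∈ A ∧ dot (castQ' t) y = 0} with hT₀
  set U₀ : Submodule ℚ (Fin d → ℚ) := Submodule.span ℚ T₀ with hU₀
  have hrefl : (dotQForm' d).IsRefl := by
    intro x z h
    rw [dotQForm_apply'] at h ⊢
    rw [dotQ'] at h ⊢
    rw [← h]
    exact Finset.sum_congr rfl fun j _ => mul_comm _ _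
  have hnd : ((dotQForm' d).restrict U₀).Nondegenerate := by
    refine ⟨?_, ?_⟩ <;> rintro ⟨v, hv⟩ h
    all_goals
      have h0 : dotQ' v v = 0 := h ⟨v, hv⟩
      exact Subtype.ext (dotQ_self_eq_zero' h0)
  have hcompl := LinearMap.BilinForm.isCompl_orthogonal_of_restrict_nondegenerate hrefl hnd
  have hqmem : q ∈ U₀ ⊔ (dotQForm' d).orthogonal U₀ := by
    rw [hcompl.sup_eq_top]; trivial
  obtain ⟨u₀, hu₀, w₀, hw₀, huw⟩ := Submodule.mem_sup.1 hqmem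
  set z' : Fin d → ℝ := castQ' w₀ with hz'
  -- linear functional vanishing on U₀ (vs y)
  have hUy : ∀ u ∈ U₀, dot (castQ' u) y = 0 := by
    have hle : U₀ ≤ LinearMap.ker (dotCastLin' y) := by
      rw [hU₀, Submodule.span_le]
      intro t ht
      exact ht.2
    intro u hu
    exact hle hu
  -- pairing of U₀ with w₀ vanishes
  have hUw : ∀ u ∈ U₀, dotQ' u w₀ = 0 := by
    intro u hu
    exact hw₀ u hu
  have hUz' : ∀ u ∈ U₀, dot (castQ' u) z' = 0 := by
    intro u hu
    rw [hz', castQ_dot', hUw u hu]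
    norm_num
  -- active constraints vanish against z'
  have hTz' : ∀ a ∈ A, dot a y = 0 → dot a z' = 0 := by
    intro a ha h0
    choose g hg using hAlat ha
    set t : Fin d → ℚ := fun j => (g j : ℚ) with htq
    have hct : castQ' t = a := by
      funext j
      show ((g j : ℚ) : ℝ) = a j
      rw [hg j]; push_cast; ring
    have htT : t ∈ T₀ := by
      constructor
      · rw [hct]; exact ha
      · rw [hct]; exact h0
    have := hUz' t (Submodule.subset_span htT)
    rwa [hct] at this
  -- Pythagoras
  have hqd : castQ' q = castQ' u₀ + z' := by rw [← huw, castQ_add']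
  have hcross : dot (castQ' u₀) (z' - y) = 0 := by
    rw [dot_sub_right', hUz' u₀ hu₀, hUy u₀ hu₀]
    ring
  have hdist : dot (castQ' q - y) (castQ' q - y) < θ := by
    have hterm : ∀ j, (castQ' q - y) j * (castQ' q - y) j ≤ ρ * ρ := by
      intro j
      have h1 : |(castQ' q - y) j| ≤ ρ := by
        have := hq j
        have h2 : (castQ' q - y) j = -(y j - (q j : ℝ)) := by
          show (q j : ℝ) - y j = _
          ring
        rw [h2, abs_neg]
        linarith
      calc (castQ' q - y) j * (castQ' q - y) j = |(castQ' q - y) j| * |(castQ' q - y) j| :=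
            (abs_mul_abs_self _).symm
        _ ≤ ρ * ρ := mul_le_mul h1 h1 (abs_nonneg _) hρ0.le
    calc dot (castQ' q - y) (castQ' q - y) ≤ ∑ _j : Fin d, ρ * ρ :=
          Finset.sum_le_sum fun j _ => hterm j
      _ = d * (ρ * ρ) := by simp [mul_comm]
      _ ≤ d * (1 * (θ / (d + 1))) := by
          apply mul_le_mul_of_nonneg_left _ (by positivity)
          exact mul_le_mul hρ1 hρ2 hρ0.le one_pos.le
      _ < θ := by
          rw [one_mul]
          rw [mul_div_assoc'] ; rw [div_lt_iff₀ (by positivity)]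
          nlinarith
  have hkey : dot (z' - y) (z' - y) ≤ dot (castQ' q - y) (castQ' q - y) := by
    have hdecomp : castQ' q - y = castQ' u₀ + (z' - y) := by
      rw [hqd]; abel
    have hexp : dot (castQ' q - y) (castQ' q - y) =
        dot (castQ' u₀) (castQ' u₀) + 2 * dot (castQ' u₀) (z' - y)
          + dot (z' - y) (z' - y) := by
      rw [hdecomp, dot_add_left', dot_add_right', dot_add_right',
        dot_comm' (z' - y) (castQ' u₀)]
      ring
    have := dot_self_nonneg' (castQ' u₀)
    rw [hexp, hcross]
    linarith
  have hvθ : dot (z' - y) (z' - y) < θ := lt_of_le_of_lt hkey hdist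
  -- coordinatewise bound
  have hvj : ∀ j, |(z' - y) j| ≤ τ := by
    intro j
    have h1 : (z' - y) j * (z' - y) j ≤ dot (z' - y) (z' - y) :=
      Finset.single_le_sum (f := fun j => (z' - y) j * (z' - y) j)
        (fun j _ => mul_self_nonneg _) (Finset.mem_univ j)
    have h2 : (z' - y) j ^ 2 < τ ^ 2 := by
      have h3 : θ ≤ τ ^ 2 := min_le_left _ _
      nlinarith
    exact (abs_lt_of_sq_lt_sq h2 hτ0.le).le
  -- z' is nonzero
  have hz'0 : z' ≠ 0 := by
    intro h
    rw [h] at hvθ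
    have h1 : dot ((0 : Fin d → ℝ) - y) (0 - y) = dot y y := by
      simp [dot]
    rw [h1] at hvθ
    exact absurd hvθ (not_lt.2 (min_le_right _ _))
  -- nonnegativity on A
  have hAz' : ∀ a ∈ A, 0 ≤ dot a z' := by
    intro a ha
    rcases hδ a ha with h0 | hδa
    · rw [hTz' a ha h0]
    · have hsplit : dot a (z' - y) = dot a z' - dot a y := dot_sub_right' a z' y
      have habs : |dot a (z' - y)| ≤ C * τ := by
        calc |dot a (z' - y)| ≤ ∑ j, |a j * (z' - y) j| := Finset.abs_sum_le_sum_abs _ _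
          _ = ∑ j, |a j| * |(z' - y) j| := by simp [abs_mul]
          _ ≤ ∑ j, |a j| * τ :=
              Finset.sum_le_sum fun j _ => mul_le_mul_of_nonneg_left (hvj j) (abs_nonneg _)
          _ = (∑ j, |a j|) * τ := by rw [Finset.sum_mul]
          _ ≤ C * τ := mul_le_mul_of_nonneg_right (hCa a ha) hτ0.le
      have hCτ : C * τ = δ := by
        rw [hτ]
        field_simp
      rw [hCτ] at habs
      have := (abs_le.1 habs).1
      linarith
  -- scale to a lattice vector
  set N : ℕ := ∏ j, (w₀ j).den with hN
  have hN0 : 0 < N := Finset.prod_pos fun j _ => (w₀ j).pos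
  have hNR : (0 : ℝ) < (N : ℝ) := by exact_mod_cast hN0
  refine ⟨(N : ℝ) • z', ?_, ?_, ?_⟩
  · intro j
    have hdvd : (w₀ j).den ∣ N := Finset.dvd_prod_of_mem _ (Finset.mem_univ j)
    obtain ⟨k, hk⟩ := hdvd
    refine ⟨(w₀ j).num * k, ?_⟩
    have hq1 : (w₀ j) * (N : ℚ) = (((w₀ j).num * k : ℤ) : ℚ) := by
      have hden : ((w₀ j).den : ℚ) ≠ 0 := by
        exact_mod_cast (w₀ j).den_nz
      have hnum : w₀ j * ((w₀ j).den : ℚ) = ((w₀ j).num : ℚ) := by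
        rw [mul_comm]
        rw_mod_cast [Rat.den_mul_eq_num]
      calc w₀ j * (N : ℚ) = w₀ j * ((w₀ j).den : ℚ) * (k : ℚ) := by
            rw [hk]; push_cast; ring
        _ = ((w₀ j).num : ℚ) * (k : ℚ) := by rw [hnum]
        _ = (((w₀ j).num * k : ℤ) : ℚ) := by push_cast; ring
    show (N : ℝ) * z' j = (((w₀ j).num * k : ℤ) : ℝ)
    have : z' j = ((w₀ j : ℚ) : ℝ) := rfl
    rw [this]
    have := congrArg (fun x : ℚ => (x : ℝ)) hq1
    push_cast at this ⊢
    linarith [this]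
  · exact smul_ne_zero (ne_of_gt hNR) hz'0
  · intro a ha
    rw [dot_smul_right']
    exact mul_nonneg hNR.le (hAz' a ha)

end RatCone
set_option maxHeartbeats 1000000 in
/-- For a dual pair of Q-nef-partitions `Δ = Δ₁ + ⋯ + Δ_r` and
`∇ = ∇₁ + ⋯ + ∇_r`, one has `Δ_i = {0}` iff `∇_i = {0}`, for each `i`. -/
theorem qnefpartition_zero_iff {d r : ℕ} (hd : 0 < d)
    (Δ : Fin r → Set (Fin d → ℝ)) (hQ : IsQNefPartition Δ) :
    ∀ i, Δ i = {0} ↔ nabla Δ i = {0} := by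
  classical
  obtain ⟨⟨hPolyT, hIntT, hEq⟩, hPolys, hZeros, hHull⟩ := hQ
  choose Mb hMb0 hMb using fun k => polytope_bound' (hPolys k)
  set Mt : ℝ := ∑ k, Mb k with hMt
  have hMt0 : 0 ≤ Mt := Finset.sum_nonneg fun k _ => hMb0 k
  have hMtB : ∀ x ∈ (∑ k, Δ k), ∀ j, |x j| ≤ Mt := by
    intro x hx j
    obtain ⟨f, hf, rfl⟩ := mem_setSum'.1 hx
    calc |(∑ k, f k) j| = |∑ k, f k j| := by rw [Finset.sum_apply]
      _ ≤ ∑ k, |f k j| := Finset.abs_sum_le_sum_abs _ _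
      _ ≤ ∑ k, Mb k := Finset.sum_le_sum fun k _ => hMb k _ (hf k (Finset.mem_univ k)) j
  have hconv : ∀ k, Convex ℝ (Δ k) := by
    intro k
    obtain ⟨F, hF, hFe⟩ := hPolys k
    rw [hFe]
    exact convex_convexHull ℝ F
  have hsubΔ : ∀ k, latticeHull (Δ k) ⊆ Δ k := fun k =>
    convexHull_min Set.inter_subset_left (hconv k)
  intro i
  constructor
  · -- forward direction
    intro hΔi
    apply Set.eq_singleton_iff_unique_mem.2
    constructor
    · simp only [nabla, Set.mem_setOf_eq]
      intro k x hx
      rw [dot_zero_right']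
      split_ifs <;> norm_num
    · intro y hy
      simp only [nabla, Set.mem_setOf_eq] at hy
      by_contra hy0
      have hA1 : ∀ k, ∀ x ∈ latticeHull (Δ k), 0 ≤ dot x y := by
        intro k x hx
        by_cases hk : k = i
        · subst hk
          have hsing : latticeHull (Δ k) = {0} := by
            rw [latticeHull, hΔi]
            have h0l : ({0} : Set (Fin d → ℝ)) ∩ latt (Fin d) = {0} :=
              Set.inter_eq_self_of_subset_left (Set.singleton_subset_iff.2 zero_mem_latt')
            rw [h0l, convexHull_singleton]
          rw [hsing] at hx
          rw [Set.mem_singleton_iff.1 hx, dot_zero_left']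
        · have h1 := hy k x hx
          rwa [if_neg hk, neg_zero] at h1
      have hA2 : ∀ x ∈ latticeHull (∑ k, Δ k), 0 ≤ dot x y := by
        intro x hx
        rw [hHull] at hx
        obtain ⟨f, hf, rfl⟩ := mem_setSum'.1 hx
        rw [dot_sum_left']
        exact Finset.sum_nonneg fun k _ => hA1 k _ (hf k (Finset.mem_univ k))
      have hAfin : ((∑ k, Δ k) ∩ latt (Fin d)).Finite := finite_bounded_latt' Mt hMtB
      have hAy : ∀ a ∈ (∑ k, Δ k) ∩ latt (Fin d), 0 ≤ dot a y := fun a ha =>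
        hA2 a (subset_convexHull ℝ _ ha)
      obtain ⟨z, hzl, hz0, hza⟩ := ratCone' hAfin Set.inter_subset_right hy0 hAy
      have hz2 : ∀ x ∈ latticeHull (∑ k, Δ k), 0 ≤ dot x z := fun x hx =>
        dot_le_on_hull' hza x hx
      have hmem : ∀ n : ℕ, ((n : ℝ) + 1) • z ∈ polarDual (∑ k, Δ k) := by
        intro n
        have h1 : ((n : ℝ) + 1) • z ∈ polarDual (latticeHull (∑ k, Δ k)) := by
          simp only [polarDual, Set.mem_setOf_eq]
          intro x hx
          rw [dot_smul_right']
          have h2 := hz2 x hx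
          nlinarith
        have h2 : ((n : ℝ) + 1) • z ∈ latt (Fin d) := by
          have hcast : ((n : ℝ) + 1) = (((n : ℤ) + 1 : ℤ) : ℝ) := by push_cast; ring
          rw [hcast]
          exact latt_smul_int' _ hzl
        have h3 : ((n : ℝ) + 1) • z ∈ latticeHull (polarDual (latticeHull (∑ k, Δ k))) :=
          subset_convexHull ℝ _ ⟨h1, h2⟩
        rwa [hEq] at h3
      obtain ⟨ε, hε0, hball⟩ : ∃ ε > 0, Metric.ball (0 : Fin d → ℝ) ε ⊆ ∑ k, Δ k := by
        rcases Metric.mem_nhds_iff.1 (mem_interior_iff_mem_nhds.1 hIntT) with ⟨ε, hε, hsub⟩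
        exact ⟨ε, hε, hsub⟩
      set c : ℝ := ε / (2 * (‖z‖ + 1)) with hc
      have hc0 : 0 < c := by positivity
      have hx₀ : (-c) • z ∈ ∑ k, Δ k := by
        apply hball
        rw [Metric.mem_ball, dist_eq_norm, sub_zero, norm_smul, Real.norm_eq_abs,
          abs_neg, abs_of_pos hc0]
        have h1 : (0:ℝ) ≤ ‖z‖ := norm_nonneg z
        rw [hc, div_mul_eq_mul_div, div_lt_iff₀ (by positivity)]
        nlinarith
      have hzz : 0 < dot z z := dot_self_pos' hz0
      obtain ⟨n, hn⟩ := exists_nat_gt (1 / (c * dot z z))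
      have hcontr := hmem n ((-c) • z) hx₀
      rw [dot_smul_left', dot_smul_right'] at hcontr
      have h4 : ((n : ℝ) + 1) ≤ 1 / (c * dot z z) := by
        rw [le_div_iff₀ (by positivity)]
        nlinarith
      linarith
  · -- backward direction
    intro hnab
    apply Set.eq_singleton_iff_unique_mem.2
    refine ⟨hZeros i, ?_⟩
    intro p hp
    have hC1 : ∀ w ∈ polarDual (latticeHull (∑ k, Δ k)) ∩ latt (Fin d), 0 ≤ dot p w := by
      rintro w ⟨hwdual, hwlatt⟩
      by_cases hcase : ∃ k, k ≠ i ∧ ∃ a, a ∈ Δ k ∩ latt (Fin d) ∧ dot a w < 0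
      · obtain ⟨k₀, hk₀i, a, ⟨haΔ, halatt⟩, haw⟩ := hcase
        obtain ⟨m, hm⟩ := dot_int' halatt hwlatt
        have hm1 : dot a w ≤ -1 := by
          rw [hm] at haw ⊢
          have hm2 : m < 0 := by exact_mod_cast haw
          have hm3 : m ≤ -1 := by omega
          exact_mod_cast hm3
        set f : Fin r → (Fin d → ℝ) := fun k => if k = i then p else if k = k₀ then a else 0
          with hf
        have hfsum : ∑ k, f k = p + a := by
          have hsplit : f = fun k =>
              (if k = i then p else 0) + (if k = k₀ then a else 0) := by
            funext k
            by_cases h1 : k = i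
            · subst h1
              simp [hf, if_neg (Ne.symm hk₀i)]
            · by_cases h2 : k = k₀
              · subst h2
                simp [hf, h1]
              · simp [hf, h1, h2]
          rw [hsplit, Finset.sum_add_distrib,
            Finset.sum_ite_eq' Finset.univ i (fun _ => p),
            Finset.sum_ite_eq' Finset.univ k₀ (fun _ => a)]
          simp
        have hpa : p + a ∈ ∑ k, Δ k := by
          apply mem_setSum'.2
          refine ⟨f, ?_, hfsum.symm⟩
          intro k _
          by_cases h1 : k = i
          · subst h1
            simpa [hf] using hp
          · by_cases h2 : k = k₀
            · subst h2
              simpa [hf, h1] using haΔ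
            · simpa [hf, h1, h2] using hZeros k
        have hwΔ : w ∈ polarDual (∑ k, Δ k) := by
          have h3 : w ∈ latticeHull (polarDual (latticeHull (∑ k, Δ k))) :=
            subset_convexHull ℝ _ ⟨hwdual, hwlatt⟩
          rwa [hEq] at h3
        have h4 := hwΔ (p + a) hpa
        rw [dot_add_left'] at h4
        linarith
      · push_neg at hcase
        set Sw : ℝ := ∑ j, |w j| with hSw
        have hSw0 : 0 ≤ Sw := Finset.sum_nonneg fun j _ => abs_nonneg _
        have hden : 0 < Mb i * Sw + 1 := by nlinarith [hMb0 i]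
        set t : ℝ := 1 / (Mb i * Sw + 1) with ht
        have ht0 : 0 < t := by positivity
        have htw : t • w ∈ nabla Δ i := by
          simp only [nabla, Set.mem_setOf_eq]
          intro k x hx
          by_cases hk : k = i
          · subst hk
            rw [if_pos rfl, dot_smul_right']
            have hxΔ : x ∈ Δ k := hsubΔ k hx
            have habs : |dot x w| ≤ Mb k * Sw := abs_dot_le' (fun j => hMb k x hxΔ j) w
            have h5 : t * (Mb k * Sw) ≤ 1 := by
              rw [ht, div_mul_eq_mul_div, one_mul, div_le_one hden]
              linarith
            nlinarith [(abs_le.1 habs).1]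
          · rw [if_neg hk, neg_zero, dot_smul_right']
            have h0 : ∀ b ∈ Δ k ∩ latt (Fin d), (0:ℝ) ≤ dot b w := fun b hb =>
              hcase k hk b hb
            exact mul_nonneg ht0.le (dot_le_on_hull' h0 x hx)
        rw [hnab, Set.mem_singleton_iff] at htw
        have hw0 : w = 0 := by
          rcases smul_eq_zero.1 htw with h | h
          · exact absurd h (ne_of_gt ht0)
          · exact h
        rw [hw0, dot_zero_right']
    have hC2 : ∀ v ∈ polarDual (∑ k, Δ k), 0 ≤ dot p v := by
      intro v hv
      rw [← hEq] at hv
      exact dot_le_on_hull_right' hC1 v hv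
    set Sp : ℝ := ∑ j, |p j| with hSp
    have hSp0 : 0 ≤ Sp := Finset.sum_nonneg fun j _ => abs_nonneg _
    have hdenc : 0 < Mt * Sp + 1 := by nlinarith
    set c : ℝ := 1 / (Mt * Sp + 1) with hc
    have hc0 : 0 < c := by positivity
    have hy₀ : (-c) • p ∈ polarDual (∑ k, Δ k) := by
      simp only [polarDual, Set.mem_setOf_eq]
      intro x hx
      rw [dot_smul_right']
      have habs : |dot x p| ≤ Mt * Sp := abs_dot_le' (fun j => hMtB x hx j) p
      have h5 : c * (Mt * Sp) ≤ 1 := by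
        rw [hc, div_mul_eq_mul_div, one_mul, div_le_one hdenc]
        linarith
      nlinarith [(abs_le.1 habs).2]
    have h6 := hC2 _ hy₀
    rw [dot_smul_right'] at h6
    have hpp : dot p p ≤ 0 := by nlinarith
    exact dot_self_eq_zero' (le_antisymm hpp (dot_self_nonneg' p))
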